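/- For every θ ∈ [0,π] and r₀ ∈ (r₊,∞), the maximal solution r(t;θ,r₀) of the radial collapse ODE is defined for all t ≥ 0, is strictly decreasing, stays in (r₊,∞), and tends to r₊ as t → ∞. Moreover there exist smooth functions Ĉ₁, Ĉ₂ of (θ,r₀) ∈ [0,π]×(r₊,∞) such that for every compact interval [r₁,r₂] ⊂ (r₊,∞) there is a constant C > 0 with |(1/(2κ₊))·ln(r(t;θ,r₀) − r₊) + t + Ĉ₁(θ,r₀)·e^{−2κ₊t} − Ĉ₂(θ,r₀)| ≤ C·e^{−4κ₊t} for all t ≥ 0, θ ∈ [0,π] and r₀ ∈ [r₁,r₂]. -/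

import Mathlib

/-!
STATEMENT 4 (global existence and asymptotics for the radial collapse ODE).

For every `θ ∈ [0,π]` and `r₀ ∈ (r₊,∞)`, the maximal solution `r(t;θ,r₀)` of
the radial collapse ODE is defined for all `t ≥ 0`, is strictly decreasing,
stays in `(r₊,∞)`, and tends to `r₊` as `t → ∞`.  Moreover there exist smooth
functions `Ĉ₁, Ĉ₂` of `(θ,r₀) ∈ [0,π]×(r₊,∞)` such that for every compact
interval `[r₁,r₂] ⊂ (r₊,∞)` there is a constant `C > 0` with
`|(1/(2κ₊))·ln(r(t;θ,r₀) − r₊) + t + Ĉ₁(θ,r₀)e^{−2κ₊t} − Ĉ₂(θ,r₀)| ≤ C·e^{−4κ₊t}`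
for all `t ≥ 0`, `θ ∈ [0,π]` and `r₀ ∈ [r₁,r₂]`.
-/

noncomputable section
open Real Set

namespace Stmt4

/-- `Δ(r) = r² − 2Mr + a² + Q²`. -/
def Δ (M a Q r : ℝ) : ℝ := r ^ 2 - 2 * M * r + a ^ 2 + Q ^ 2

/-- Outer horizon `r₊`. -/
def rplus (M a Q : ℝ) : ℝ := M + Real.sqrt (M ^ 2 - (a ^ 2 + Q ^ 2))

/-- Inner horizon `r₋`. -/
def rminus (M a Q : ℝ) : ℝ := M - Real.sqrt (M ^ 2 - (a ^ 2 + Q ^ 2))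

/-- Surface gravity of the outer horizon. -/
def κplus (M a Q : ℝ) : ℝ :=
  (rplus M a Q - rminus M a Q) / (2 * ((rplus M a Q) ^ 2 + a ^ 2))

/-- `σ²(r,θ) = (r²+a²)² − a²Δ(r)sin²θ`. -/
def sigma2 (M a Q r θ : ℝ) : ℝ :=
  (r ^ 2 + a ^ 2) ^ 2 - a ^ 2 * Δ M a Q r * Real.sin θ ^ 2

/-- Right-hand side of the radial collapse ODE :
`dr/dt = −√((r²+a²)(2Mr−Q²))·Δ(r)/σ²(r,θ)`. -/
def V (M a Q θ r : ℝ) : ℝ :=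
  -Real.sqrt ((r ^ 2 + a ^ 2) * (2 * M * r - Q ^ 2)) * Δ M a Q r
    / sigma2 M a Q r θ

/-! ### Auxiliary definitions -/

/-- `√((r²+a²)(2Mr−Q²))`. -/
def Sf (M a Q r : ℝ) : ℝ := Real.sqrt ((r ^ 2 + a ^ 2) * (2 * M * r - Q ^ 2))

/-- `1/(2κ₊) = (r₊²+a²)/(r₊−r₋)`. -/
def cC (M a Q : ℝ) : ℝ := ((rplus M a Q) ^ 2 + a ^ 2) / (rplus M a Q - rminus M a Q)

/-- The polynomial quotient `((p−m)²(r²+a²)³ − (p²+a²)²(r−m)²((p+m)r−pm+a²))/(r−p)`. -/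
def T1e (p m a r : ℝ) : ℝ :=
  r^5*p^2 - 2*r^5*p*m + r^5*m^2 + r^4*p^3 - 2*r^4*p^2*m + r^4*p*m^2 + r^3*p^4
  - 2*r^3*p^3*m + r^3*p^2*m^2 + 3*r^3*p^2*a^2 - 6*r^3*p*m*a^2 + 3*r^3*m^2*a^2
  - 3*r^2*p^4*m + r^2*p^3*m^2 + r^2*p^3*a^2 - 8*r^2*p^2*m*a^2 + 3*r^2*p*m^2*a^2
  - r^2*p*a^4 - r^2*m*a^4 + 3*r*p^4*m^2 - 2*r*p^3*m*a^2 + 7*r*p^2*m^2*a^2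
  - 4*r*p*m*a^4 + 5*r*m^2*a^4 - r*a^6 - p^4*m^3 + p^3*m^2*a^2 - 2*p^2*m^3*a^2
  + 2*p*m^2*a^4 - p*a^6 - m^3*a^4 + 2*m*a^6

lemma key_ident (p m a r : ℝ) :
    (p-m)^2*(r^2+a^2)^4 - (p^2+a^2)^2*(r-m)^2*((r^2+a^2)*((p+m)*r - p*m + a^2))
      = (r-p) * ((r^2+a^2) * T1e p m a r) := by
  unfold T1e; ring

/-- Regular part of `1/(r−r₊)`-singular decomposition of `(r²+a²)²/(S·Δ)`. -/
def h0f (M a Q r : ℝ) : ℝ :=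
  (r ^ 2 + a ^ 2) * T1e (rplus M a Q) (rminus M a Q) a r /
    ((rplus M a Q - rminus M a Q) ^ 2 *
      ((r ^ 2 + a ^ 2) ^ 2 + cC M a Q * (r - rminus M a Q) * Sf M a Q r) *
      Sf M a Q r * (r - rminus M a Q))

def h1f (M a Q r : ℝ) : ℝ := a ^ 2 / Sf M a Q r

def hcf (M a Q θ r : ℝ) : ℝ := h0f M a Q r - Real.sin θ ^ 2 * h1f M a Q r

def H0f (M a Q r : ℝ) : ℝ := ∫ s in rplus M a Q..r, h0f M a Q s

def Psif (M a Q r : ℝ) : ℝ := ∫ s in rplus M a Q..r, h1f M a Q s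

def Hf (M a Q θ r : ℝ) : ℝ := H0f M a Q r - Real.sin θ ^ 2 * Psif M a Q r

def C2f (M a Q θ r0 : ℝ) : ℝ := cC M a Q * Real.log (r0 - rplus M a Q) + Hf M a Q θ r0

def C1f (M a Q θ r0 : ℝ) : ℝ :=
  hcf M a Q θ (rplus M a Q) * Real.exp (2 * κplus M a Q * C2f M a Q θ r0)

def tauf (M a Q θ r0 r : ℝ) : ℝ :=
  C2f M a Q θ r0 - (cC M a Q * Real.log (r - rplus M a Q) + Hf M a Q θ r)

open scoped Classical in
def rrf (M a Q t θ r0 : ℝ) : ℝ :=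
  if h : ∃ r, rplus M a Q < r ∧ tauf M a Q θ r0 r = t then h.choose else r0

/-! ### Basic facts -/

section Basic

set_option linter.unusedSectionVars false

variable {M a Q : ℝ} (hM : 0 < M) (ha : 0 < a) (hsub : a ^ 2 + Q ^ 2 < M ^ 2)

include hM ha hsub in
lemma sq_sub_pos : 0 < M ^ 2 - (a ^ 2 + Q ^ 2) := by nlinarith

include hM ha hsub

lemma rm_lt_rp : rminus M a Q < rplus M a Q := by
  have := Real.sqrt_pos.2 (sq_sub_pos hM ha hsub)
  unfold rplus rminus; linarith

lemma rm_pos : 0 < rminus M a Q := by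
  have h1 : Real.sqrt (M ^ 2 - (a ^ 2 + Q ^ 2)) < M := by
    have : Real.sqrt (M ^ 2 - (a ^ 2 + Q ^ 2)) < Real.sqrt (M ^ 2) := by
      apply Real.sqrt_lt_sqrt (le_of_lt (sq_sub_pos hM ha hsub))
      nlinarith [sq_nonneg a, sq_nonneg Q]
    rwa [Real.sqrt_sq hM.le] at this
  unfold rminus; linarith

lemma rp_pos : 0 < rplus M a Q := lt_trans (rm_pos hM ha hsub) (rm_lt_rp hM ha hsub)

lemma rp_add_rm : rplus M a Q + rminus M a Q = 2 * M := by unfold rplus rminus; ring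

lemma rp_mul_rm : rplus M a Q * rminus M a Q = a ^ 2 + Q ^ 2 := by
  unfold rplus rminus
  have : Real.sqrt (M ^ 2 - (a ^ 2 + Q ^ 2)) ^ 2 = M ^ 2 - (a ^ 2 + Q ^ 2) :=
    Real.sq_sqrt (le_of_lt (sq_sub_pos hM ha hsub))
  linear_combination -this

lemma delta_factor (r : ℝ) : Δ M a Q r = (r - rplus M a Q) * (r - rminus M a Q) := by
  have h1 := rp_add_rm hM ha hsub
  have h2 := rp_mul_rm hM ha hsub
  unfold Δ; linear_combination r * h1 - h2

lemma cC_pos : 0 < cC M a Q := by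
  apply div_pos
  · nlinarith [rp_pos hM ha hsub, ha]
  · linarith [rm_lt_rp hM ha hsub]

lemma kappa_pos : 0 < κplus M a Q := by
  apply div_pos
  · linarith [rm_lt_rp hM ha hsub]
  · nlinarith [rp_pos hM ha hsub, ha]

lemma cC_kappa : cC M a Q * (2 * κplus M a Q) = 1 := by
  have h1 := rm_lt_rp hM ha hsub
  have h2 : (0:ℝ) < (rplus M a Q) ^ 2 + a ^ 2 := by nlinarith [rp_pos hM ha hsub, ha]
  have h3 : rplus M a Q - rminus M a Q ≠ 0 := by linarith
  unfold cC κplus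
  field_simp

lemma one_div_two_kappa : 1 / (2 * κplus M a Q) = cC M a Q := by
  have h := cC_kappa hM ha hsub
  have hκ : (0:ℝ) < 2 * κplus M a Q := by have := kappa_pos hM ha hsub; linarith
  have hκ' : 2 * κplus M a Q ≠ 0 := ne_of_gt hκ
  rw [div_eq_iff hκ']
  linarith [h]

lemma ell_pos {r : ℝ} (hr : rminus M a Q < r) : 0 < 2 * M * r - Q ^ 2 := by
  have h1 := rp_add_rm hM ha hsub
  have h2 := rp_mul_rm hM ha hsub
  have hm := rm_pos hM ha hsub
  nlinarith [ha, hM]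

lemma Pv_pos {r : ℝ} (hr : rminus M a Q < r) : 0 < (r ^ 2 + a ^ 2) * (2 * M * r - Q ^ 2) := by
  have := ell_pos hM ha hsub hr
  have : (0:ℝ) < r ^ 2 + a ^ 2 := by positivity
  exact mul_pos this (ell_pos hM ha hsub hr)

lemma Sf_pos {r : ℝ} (hr : rminus M a Q < r) : 0 < Sf M a Q r :=
  Real.sqrt_pos.2 (Pv_pos hM ha hsub hr)

lemma Sf_sq {r : ℝ} (hr : rminus M a Q < r) :
    Sf M a Q r ^ 2 = (r ^ 2 + a ^ 2) * (2 * M * r - Q ^ 2) :=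
  Real.sq_sqrt (le_of_lt (Pv_pos hM ha hsub hr))

lemma ell_rp : 2 * M * rplus M a Q - Q ^ 2 = (rplus M a Q) ^ 2 + a ^ 2 := by
  have h1 := rp_add_rm hM ha hsub
  have h2 := rp_mul_rm hM ha hsub
  nlinarith [h1, h2]

lemma Sf_rp : Sf M a Q (rplus M a Q) = (rplus M a Q) ^ 2 + a ^ 2 := by
  have h2 : (0:ℝ) ≤ (rplus M a Q) ^ 2 + a ^ 2 := by positivity
  rw [Sf, ell_rp hM ha hsub]
  exact Real.sqrt_mul_self h2

lemma den2_pos {r : ℝ} (hr : rminus M a Q < r) :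
    0 < (r ^ 2 + a ^ 2) ^ 2 + cC M a Q * (r - rminus M a Q) * Sf M a Q r := by
  have h1 : (0:ℝ) < (r ^ 2 + a ^ 2) ^ 2 := by positivity
  have h2 := cC_pos hM ha hsub
  have h3 := Sf_pos hM ha hsub hr
  have h4 : (0:ℝ) < r - rminus M a Q := by linarith
  nlinarith [mul_pos (mul_pos h2 h4) h3]

lemma delta_le {r : ℝ} (hr : rminus M a Q < r) : Δ M a Q r ≤ r ^ 2 + a ^ 2 := by
  have := ell_pos hM ha hsub hr
  unfold Δ; nlinarith

lemma sigma2_pos {r θ : ℝ} (hr : rminus M a Q < r) : 0 < sigma2 M a Q r θ := by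
  have hs : Real.sin θ ^ 2 ≤ 1 := Real.sin_sq_le_one θ
  have hs0 : 0 ≤ Real.sin θ ^ 2 := sq_nonneg _
  have hd := delta_le hM ha hsub hr
  have hu : (0:ℝ) < r ^ 2 + a ^ 2 := by positivity
  have hr0 : 0 < r := lt_trans (rm_pos hM ha hsub) hr
  unfold sigma2
  rcases le_or_gt (Δ M a Q r) 0 with h | h
  · nlinarith [mul_nonneg hs0 (mul_nonneg (sq_nonneg a) (neg_nonneg.2 h))]
  · have e1 : a ^ 2 * Δ M a Q r * Real.sin θ ^ 2 ≤ a ^ 2 * Δ M a Q r := by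
      have := mul_le_mul_of_nonneg_left hs (mul_pos (pow_pos ha 2) h).le
      linarith [this]
    have e2 : a ^ 2 * Δ M a Q r ≤ a ^ 2 * (r ^ 2 + a ^ 2) := by nlinarith
    nlinarith [pow_pos hr0 2]

lemma h0f_eq {r : ℝ} (hr : rplus M a Q < r) :
    h0f M a Q r = (r ^ 2 + a ^ 2) ^ 2 / (Sf M a Q r * Δ M a Q r)
      - cC M a Q / (r - rplus M a Q) := by
  set p := rplus M a Q
  set m := rminus M a Q
  have hmp : m < p := rm_lt_rp hM ha hsub
  have hrm : m < r := lt_trans hmp hr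
  have hS := Sf_pos hM ha hsub hrm
  have hS2 := Sf_sq hM ha hsub hrm
  have hden2 := den2_pos hM ha hsub hrm
  have hpm : p - m ≠ 0 := by linarith
  have hrp : r - p ≠ 0 := by linarith
  have hrm' : r - m ≠ 0 := by linarith
  have hup : (0:ℝ) < p ^ 2 + a ^ 2 := by nlinarith [rp_pos hM ha hsub, ha]
  have hc : cC M a Q * (p - m) = p ^ 2 + a ^ 2 := div_mul_cancel₀ _ hpm
  have hc2 : cC M a Q ^ 2 * (p - m) ^ 2 = (p ^ 2 + a ^ 2) ^ 2 := by
    calc cC M a Q ^ 2 * (p - m) ^ 2 = (cC M a Q * (p - m)) ^ 2 := by ring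
    _ = (p ^ 2 + a ^ 2) ^ 2 := by rw [hc]
  have hkey := key_ident p m a r
  have h1 := rp_add_rm hM ha hsub
  have h2 := rp_mul_rm hM ha hsub
  have hD1 : (p - m) ^ 2 *
      ((r ^ 2 + a ^ 2) ^ 2 + cC M a Q * (r - m) * Sf M a Q r) * Sf M a Q r * (r - m) ≠ 0 := by
    positivity
  have hD2 : Sf M a Q r * ((r - p) * (r - m)) ≠ 0 := by positivity
  have hrw : (r ^ 2 + a ^ 2) ^ 2 / (Sf M a Q r * ((r - p) * (r - m))) - cC M a Q / (r - p)
      = ((r ^ 2 + a ^ 2) ^ 2 - cC M a Q * (r - m) * Sf M a Q r)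
        / (Sf M a Q r * ((r - p) * (r - m))) := by
    rw [div_sub_div _ _ hD2 hrp, div_eq_div_iff (by positivity) (by positivity)]
    ring
  rw [h0f, delta_factor hM ha hsub, hrw, div_eq_div_iff hD1 hD2]
  linear_combination (-(Sf M a Q r * (r - m))) * hkey
    + (Sf M a Q r ^ 3 * (r - m) ^ 3) * hc2
    + (Sf M a Q r * (r - m) ^ 3 * (p ^ 2 + a ^ 2) ^ 2) * hS2
    + (-(Sf M a Q r * (r - m) ^ 3 * (p ^ 2 + a ^ 2) ^ 2 * (r ^ 2 + a ^ 2) * r)) * h1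
    + (Sf M a Q r * (r - m) ^ 3 * (p ^ 2 + a ^ 2) ^ 2 * (r ^ 2 + a ^ 2)) * h2

end Basic

/-! ### Smoothness -/

section Smooth

set_option linter.unusedSectionVars false

variable {M a Q : ℝ} (hM : 0 < M) (ha : 0 < a) (hsub : a ^ 2 + Q ^ 2 < M ^ 2)

include hM ha hsub

lemma contDiffOn_Sf : ContDiffOn ℝ (⊤ : ℕ∞) (Sf M a Q) (Ioi (rminus M a Q)) := by
  intro r hr
  have h := (Pv_pos hM ha hsub hr).ne'
  have hpoly : ContDiffAt ℝ (⊤ : ℕ∞) (fun r : ℝ => (r ^ 2 + a ^ 2) * (2 * M * r - Q ^ 2)) r := by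
    fun_prop
  exact ((Real.contDiffAt_sqrt h).comp r hpoly).contDiffWithinAt

lemma contDiffOn_h0f : ContDiffOn ℝ (⊤ : ℕ∞) (h0f M a Q) (Ioi (rminus M a Q)) := by
  have hnum : ContDiffOn ℝ (⊤ : ℕ∞)
      (fun r : ℝ => (r ^ 2 + a ^ 2) * T1e (rplus M a Q) (rminus M a Q) a r)
      (Ioi (rminus M a Q)) := by
    simp only [T1e]; exact (by fun_prop : ContDiff ℝ (⊤ : ℕ∞) _).contDiffOn
  have hden : ContDiffOn ℝ (⊤ : ℕ∞)
      (fun r : ℝ => (rplus M a Q - rminus M a Q) ^ 2 *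
        ((r ^ 2 + a ^ 2) ^ 2 + cC M a Q * (r - rminus M a Q) * Sf M a Q r) *
        Sf M a Q r * (r - rminus M a Q)) (Ioi (rminus M a Q)) := by
    have hS := contDiffOn_Sf hM ha hsub
    have h1 : ContDiffOn ℝ (⊤ : ℕ∞)
        (fun r : ℝ => (r ^ 2 + a ^ 2) ^ 2 + cC M a Q * (r - rminus M a Q) * Sf M a Q r)
        (Ioi (rminus M a Q)) := by
      apply ContDiffOn.add
      · exact (by fun_prop : ContDiff ℝ (⊤ : ℕ∞) fun r : ℝ => (r ^ 2 + a ^ 2) ^ 2).contDiffOn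
      · exact ContDiffOn.mul
          ((by fun_prop : ContDiff ℝ (⊤ : ℕ∞)
            fun r : ℝ => cC M a Q * (r - rminus M a Q)).contDiffOn) hS
    exact ((((by fun_prop : ContDiff ℝ (⊤ : ℕ∞)
      fun _ : ℝ => (rplus M a Q - rminus M a Q) ^ 2).contDiffOn).mul h1).mul hS).mul
      ((by fun_prop : ContDiff ℝ (⊤ : ℕ∞) fun r : ℝ => r - rminus M a Q).contDiffOn)
  apply ContDiffOn.div hnum hden
  intro r hr
  have h1 := den2_pos hM ha hsub hr
  have h2 := Sf_pos hM ha hsub hr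
  have h3 : rminus M a Q < rplus M a Q := rm_lt_rp hM ha hsub
  have h4 : (0:ℝ) < r - rminus M a Q := sub_pos.2 hr
  exact (mul_pos (mul_pos (mul_pos (pow_pos (sub_pos.2 h3) 2) h1) h2) h4).ne'

lemma contDiffOn_h1f : ContDiffOn ℝ (⊤ : ℕ∞) (h1f M a Q) (Ioi (rminus M a Q)) := by
  apply ContDiffOn.div (contDiff_const.contDiffOn) (contDiffOn_Sf hM ha hsub)
  exact fun r hr => (Sf_pos hM ha hsub hr).ne'

lemma continuousOn_h0f : ContinuousOn (h0f M a Q) (Ioi (rminus M a Q)) :=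
  (contDiffOn_h0f hM ha hsub).continuousOn

lemma continuousOn_h1f : ContinuousOn (h1f M a Q) (Ioi (rminus M a Q)) :=
  (contDiffOn_h1f hM ha hsub).continuousOn

lemma intervalIntegrable_aux {f : ℝ → ℝ} (hf : ContinuousOn f (Ioi (rminus M a Q)))
    {x y : ℝ} (hx : rminus M a Q < x) (hy : rminus M a Q < y) :
    IntervalIntegrable f MeasureTheory.volume x y := by
  apply ContinuousOn.intervalIntegrable
  apply hf.mono
  intro z hz
  have := hz.1
  rcases le_total x y with h | h
  · rw [Set.uIcc_of_le h] at hz; exact lt_of_lt_of_le hx hz.1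
  · rw [Set.uIcc_of_ge h] at hz; exact lt_of_lt_of_le hy hz.1

lemma H0f_hasDerivAt {r : ℝ} (hr : rminus M a Q < r) :
    HasDerivAt (H0f M a Q) (h0f M a Q r) r := by
  apply intervalIntegral.integral_hasDerivAt_right
    (intervalIntegrable_aux hM ha hsub (continuousOn_h0f hM ha hsub)
      (lt_trans (rm_pos hM ha hsub) (by linarith [rm_lt_rp hM ha hsub, rm_pos hM ha hsub]) |>.trans_le le_rfl |> fun _ => rm_lt_rp hM ha hsub) hr)
  · exact (continuousOn_h0f hM ha hsub).stronglyMeasurableAtFilter isOpen_Ioi _ hr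
  · exact (continuousOn_h0f hM ha hsub).continuousAt (Ioi_mem_nhds hr)

lemma Psif_hasDerivAt {r : ℝ} (hr : rminus M a Q < r) :
    HasDerivAt (Psif M a Q) (h1f M a Q r) r := by
  apply intervalIntegral.integral_hasDerivAt_right
    (intervalIntegrable_aux hM ha hsub (continuousOn_h1f hM ha hsub)
      (rm_lt_rp hM ha hsub) hr)
  · exact (continuousOn_h1f hM ha hsub).stronglyMeasurableAtFilter isOpen_Ioi _ hr
  · exact (continuousOn_h1f hM ha hsub).continuousAt (Ioi_mem_nhds hr)

lemma Hf_hasDerivAt (θ : ℝ) {r : ℝ} (hr : rminus M a Q < r) :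
    HasDerivAt (Hf M a Q θ) (hcf M a Q θ r) r := by
  exact (H0f_hasDerivAt hM ha hsub hr).sub
    ((Psif_hasDerivAt hM ha hsub hr).const_mul (Real.sin θ ^ 2))

lemma contDiffOn_H0f : ContDiffOn ℝ (⊤ : ℕ∞) (H0f M a Q) (Ioi (rminus M a Q)) := by
  rw [contDiffOn_infty_iff_deriv_of_isOpen isOpen_Ioi]
  constructor
  · exact fun r hr => (H0f_hasDerivAt hM ha hsub hr).differentiableAt.differentiableWithinAt
  · exact (contDiffOn_h0f hM ha hsub).congr fun r hr => (H0f_hasDerivAt hM ha hsub hr).deriv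

lemma contDiffOn_Psif : ContDiffOn ℝ (⊤ : ℕ∞) (Psif M a Q) (Ioi (rminus M a Q)) := by
  rw [contDiffOn_infty_iff_deriv_of_isOpen isOpen_Ioi]
  constructor
  · exact fun r hr => (Psif_hasDerivAt hM ha hsub hr).differentiableAt.differentiableWithinAt
  · exact (contDiffOn_h1f hM ha hsub).congr fun r hr => (Psif_hasDerivAt hM ha hsub hr).deriv

lemma contDiffOn_Hpair :
    ContDiffOn ℝ (⊤ : ℕ∞) (fun q : ℝ × ℝ => Hf M a Q q.1 q.2)
      (univ ×ˢ Ioi (rminus M a Q)) := by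
  apply ContDiffOn.sub
  · exact (contDiffOn_H0f hM ha hsub).comp contDiff_snd.contDiffOn fun q hq => hq.2
  · apply ContDiffOn.mul
    · exact ((Real.contDiff_sin.comp contDiff_fst).pow 2).contDiffOn
    · exact (contDiffOn_Psif hM ha hsub).comp contDiff_snd.contDiffOn fun q hq => hq.2

lemma tauf_hasDerivAt (θ r0 : ℝ) {r : ℝ} (hr : rplus M a Q < r) :
    HasDerivAt (tauf M a Q θ r0)
      (-(sigma2 M a Q r θ / (Sf M a Q r * Δ M a Q r))) r := by
  have hrm : rminus M a Q < r := lt_trans (rm_lt_rp hM ha hsub) hr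
  have hrp : r - rplus M a Q ≠ 0 := sub_ne_zero.2 (ne_of_gt hr)
  have hlog : HasDerivAt (fun x : ℝ => Real.log (x - rplus M a Q)) (1 / (r - rplus M a Q)) r := by
    have := (Real.hasDerivAt_log hrp).comp r ((hasDerivAt_id r).sub_const (rplus M a Q))
    exact ((hasDerivAt_id' r).sub_const (rplus M a Q)).log hrp
  have hH := Hf_hasDerivAt hM ha hsub θ hrm
  have hder : HasDerivAt (tauf M a Q θ r0)
      (0 - (cC M a Q * (1 / (r - rplus M a Q)) + hcf M a Q θ r)) r :=
    (hasDerivAt_const r _).sub ((hlog.const_mul (cC M a Q)).add hH)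
  convert hder using 1
  have hS := (Sf_pos hM ha hsub hrm).ne'
  have hΔ : Δ M a Q r ≠ 0 := by
    rw [delta_factor hM ha hsub]
    exact mul_ne_zero hrp (sub_ne_zero.2 (ne_of_gt hrm))
  rw [hcf, h0f_eq hM ha hsub hr, h1f, sigma2]
  field_simp
  ring

lemma taud_pos (θ : ℝ) {r : ℝ} (hr : rplus M a Q < r) :
    0 < sigma2 M a Q r θ / (Sf M a Q r * Δ M a Q r) := by
  have hrm : rminus M a Q < r := lt_trans (rm_lt_rp hM ha hsub) hr
  apply div_pos (sigma2_pos hM ha hsub hrm)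
  apply mul_pos (Sf_pos hM ha hsub hrm)
  rw [delta_factor hM ha hsub]
  exact mul_pos (sub_pos.2 hr) (sub_pos.2 hrm)

end Smooth

/-! ### The time function and its inverse -/

section Inverse

set_option linter.unusedSectionVars false

variable {M a Q : ℝ} (hM : 0 < M) (ha : 0 < a) (hsub : a ^ 2 + Q ^ 2 < M ^ 2)

include hM ha hsub

lemma hcf_add (θ : ℝ) {r : ℝ} (hr : rplus M a Q < r) :
    cC M a Q / (r - rplus M a Q) + hcf M a Q θ r
      = sigma2 M a Q r θ / (Sf M a Q r * Δ M a Q r) := by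
  have hrm : rminus M a Q < r := lt_trans (rm_lt_rp hM ha hsub) hr
  have hrp : r - rplus M a Q ≠ 0 := sub_ne_zero.2 (ne_of_gt hr)
  have hS := (Sf_pos hM ha hsub hrm).ne'
  have hΔ : Δ M a Q r ≠ 0 := by
    rw [delta_factor hM ha hsub]
    exact mul_ne_zero hrp (sub_ne_zero.2 (ne_of_gt hrm))
  rw [hcf, h0f_eq hM ha hsub hr, h1f, sigma2]
  field_simp
  ring

lemma Hf_zero (θ : ℝ) : Hf M a Q θ (rplus M a Q) = 0 := by
  simp [Hf, H0f, Psif, intervalIntegral.integral_same]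

lemma continuousOn_hcf (θ : ℝ) : ContinuousOn (hcf M a Q θ) (Ioi (rminus M a Q)) := by
  have : ContinuousOn (fun r => h0f M a Q r - Real.sin θ ^ 2 * h1f M a Q r)
      (Ioi (rminus M a Q)) :=
    (continuousOn_h0f hM ha hsub).sub (continuousOn_const.mul (continuousOn_h1f hM ha hsub))
  exact this

lemma Hf_eq_integral (θ : ℝ) {r : ℝ} (hr : rminus M a Q < r) :
    Hf M a Q θ r = ∫ s in rplus M a Q..r, hcf M a Q θ s := by
  rw [Hf, H0f, Psif, ← intervalIntegral.integral_const_mul,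
    ← intervalIntegral.integral_sub
      (intervalIntegrable_aux hM ha hsub (continuousOn_h0f hM ha hsub)
        (rm_lt_rp hM ha hsub) hr)
      (intervalIntegrable_aux hM ha hsub (f := fun x => Real.sin θ ^ 2 * h1f M a Q x)
        (continuousOn_const.mul (continuousOn_h1f hM ha hsub)) (rm_lt_rp hM ha hsub) hr)]
  rfl

lemma tauf_self (θ r0 : ℝ) : tauf M a Q θ r0 r0 = 0 := by
  simp [tauf, C2f]

lemma tauf_strictAntiOn (θ r0 : ℝ) :
    StrictAntiOn (tauf M a Q θ r0) (Ioi (rplus M a Q)) := by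
  apply strictAntiOn_of_deriv_neg (convex_Ioi _)
  · intro r hr
    exact ((tauf_hasDerivAt hM ha hsub θ r0 hr).continuousAt).continuousWithinAt
  · intro r hr
    rw [interior_Ioi] at hr
    rw [(tauf_hasDerivAt hM ha hsub θ r0 hr).deriv]
    exact neg_lt_zero.2 (taud_pos hM ha hsub θ hr)

lemma tauf_continuousOn (θ r0 : ℝ) {s : Set ℝ} (hs : s ⊆ Ioi (rplus M a Q)) :
    ContinuousOn (tauf M a Q θ r0) s := fun r hr =>
  ((tauf_hasDerivAt hM ha hsub θ r0 (hs hr)).continuousAt).continuousWithinAt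

lemma tauf_tendsto_top (θ r0 : ℝ) :
    Filter.Tendsto (tauf M a Q θ r0) (nhdsWithin (rplus M a Q) (Ioi (rplus M a Q)))
      Filter.atTop := by
  have hrw : tauf M a Q θ r0 = fun r =>
      (C2f M a Q θ r0 - Hf M a Q θ r) + cC M a Q * (-Real.log (r - rplus M a Q)) := by
    funext r; rw [tauf]; ring
  rw [hrw]
  apply Filter.Tendsto.add_atTop (C := C2f M a Q θ r0 - Hf M a Q θ (rplus M a Q))
  · apply Filter.Tendsto.mono_left _ nhdsWithin_le_nhds
    exact (tendsto_const_nhds.sub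
      ((Hf_hasDerivAt hM ha hsub θ (rm_lt_rp hM ha hsub)).continuousAt))
  · apply Filter.Tendsto.const_mul_atTop (cC_pos hM ha hsub)
    rw [Filter.tendsto_neg_atTop_iff]
    have hsubt : Filter.Tendsto (fun r : ℝ => r - rplus M a Q)
        (nhdsWithin (rplus M a Q) (Ioi (rplus M a Q))) (nhdsWithin 0 (Ioi 0)) := by
      apply tendsto_nhdsWithin_of_tendsto_nhds_of_eventually_within
      · have : Filter.Tendsto (fun r : ℝ => r - rplus M a Q) (nhds (rplus M a Q))
            (nhds (rplus M a Q - rplus M a Q)) :=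
          (continuous_id.sub continuous_const).tendsto _
        simpa using this.mono_left nhdsWithin_le_nhds
      · filter_upwards [self_mem_nhdsWithin] with r hr
        exact sub_pos.2 (Set.mem_Ioi.1 hr)
    exact Real.tendsto_log_nhdsGT_zero.comp hsubt

lemma Wv_lower (θ : ℝ) {r : ℝ} (hr : max (max (rplus M a Q + 1) a) 1 ≤ r) :
    1 / (2 * Real.sqrt M) ≤ sigma2 M a Q r θ / (Sf M a Q r * Δ M a Q r) := by
  have hp1 : rplus M a Q + 1 ≤ r := le_trans (le_max_left _ _) (le_trans (le_max_left _ _) hr)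
  have haR : a ≤ r := le_trans (le_max_right _ _) (le_trans (le_max_left _ _) hr)
  have h1R : (1:ℝ) ≤ r := le_trans (le_max_right _ _) hr
  have hrp : rplus M a Q < r := by linarith
  have hrm : rminus M a Q < r := lt_trans (rm_lt_rp hM ha hsub) hrp
  have hΔpos : 0 < Δ M a Q r := by
    rw [delta_factor hM ha hsub]; exact mul_pos (sub_pos.2 hrp) (sub_pos.2 hrm)
  have hSpos := Sf_pos hM ha hsub hrm
  have hs : Real.sin θ ^ 2 ≤ 1 := Real.sin_sq_le_one θ
  have hs0 : 0 ≤ Real.sin θ ^ 2 := sq_nonneg _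
  have hdle := delta_le hM ha hsub hrm
  have hσ : (r ^ 2 + a ^ 2) * r ^ 2 ≤ sigma2 M a Q r θ := by
    have e1 : a ^ 2 * Δ M a Q r * Real.sin θ ^ 2 ≤ a ^ 2 * Δ M a Q r := by
      have := mul_le_mul_of_nonneg_left hs (mul_pos (pow_pos ha 2) hΔpos).le
      linarith [this]
    have e2 : a ^ 2 * Δ M a Q r ≤ a ^ 2 * (r ^ 2 + a ^ 2) := by nlinarith
    rw [sigma2]; nlinarith
  have hsqM : Real.sqrt M ^ 2 = M := Real.sq_sqrt hM.le
  have hsqMpos : 0 < Real.sqrt M := Real.sqrt_pos.2 hM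
  have hS_le : Sf M a Q r ≤ 2 * Real.sqrt M * r ^ 2 := by
    have hr0 : (0:ℝ) < r := lt_of_lt_of_le one_pos h1R
    have hb : (r ^ 2 + a ^ 2) * (2 * M * r - Q ^ 2) ≤ (2 * Real.sqrt M * r ^ 2) ^ 2 := by
      have hell := ell_pos hM ha hsub hrm
      have e1 : r ^ 2 + a ^ 2 ≤ 2 * r ^ 2 := by nlinarith
      have e2 : 2 * M * r - Q ^ 2 ≤ 2 * M * r := by nlinarith [sq_nonneg Q]
      have e4 : (r ^ 2 + a ^ 2) * (2 * M * r - Q ^ 2) ≤ 2 * r ^ 2 * (2 * M * r) :=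
        mul_le_mul e1 e2 hell.le (by positivity)
      have e5 : r ^ 3 ≤ r ^ 4 := by nlinarith [pow_pos hr0 3]
      calc (r ^ 2 + a ^ 2) * (2 * M * r - Q ^ 2) ≤ 2 * r ^ 2 * (2 * M * r) := e4
        _ = 4 * M * r ^ 3 := by ring
        _ ≤ 4 * M * r ^ 4 := by nlinarith
        _ = (2 * Real.sqrt M * r ^ 2) ^ 2 := by linear_combination (-(4*r^4)) * hsqM
    calc Sf M a Q r ≤ Real.sqrt ((2 * Real.sqrt M * r ^ 2) ^ 2) := Real.sqrt_le_sqrt hb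
    _ = 2 * Real.sqrt M * r ^ 2 := Real.sqrt_sq (by positivity)
  have hSD_le : Sf M a Q r * Δ M a Q r ≤ 2 * Real.sqrt M * r ^ 2 * (r ^ 2 + a ^ 2) :=
    mul_le_mul hS_le hdle hΔpos.le (by positivity)
  rw [le_div_iff₀ (mul_pos hSpos hΔpos)]
  calc 1 / (2 * Real.sqrt M) * (Sf M a Q r * Δ M a Q r)
      ≤ 1 / (2 * Real.sqrt M) * (2 * Real.sqrt M * r ^ 2 * (r ^ 2 + a ^ 2)) := by
        apply mul_le_mul_of_nonneg_left hSD_le (by positivity)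
    _ = r ^ 2 * (r ^ 2 + a ^ 2) := by field_simp
    _ ≤ sigma2 M a Q r θ := by linarith [hσ]

lemma tauf_est (θ r0 : ℝ) {r : ℝ} (hr : max (max (rplus M a Q + 1) a) 1 ≤ r) :
    tauf M a Q θ r0 r ≤ tauf M a Q θ r0 (max (max (rplus M a Q + 1) a) 1)
      - 1 / (2 * Real.sqrt M) * (r - max (max (rplus M a Q + 1) a) 1) := by
  set R := max (max (rplus M a Q + 1) a) 1 with hR
  set p := rplus M a Q
  set β := 1 / (2 * Real.sqrt M) with hβ
  have hβpos : 0 < β := by rw [hβ]; positivity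
  have hpR : p < R := by
    have : p + 1 ≤ R := le_trans (le_max_left _ _) (le_max_left _ _)
    linarith
  have hmp := rm_lt_rp hM ha hsub
  have hmR : rminus M a Q < R := lt_trans hmp hpR
  have hpr : p < r := lt_of_lt_of_le hpR (by linarith [hr])
  have hmr : rminus M a Q < r := lt_trans hmp hpr
  set g := fun s => cC M a Q * (1 / (s - p)) + hcf M a Q θ s with hg
  have hIcc : Set.uIcc R r = Icc R r := Set.uIcc_of_le hr
  have hint_a : IntervalIntegrable (fun s => cC M a Q * (1 / (s - p)))
      MeasureTheory.volume R r := by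
    apply ContinuousOn.intervalIntegrable
    rw [hIcc]
    apply ContinuousOn.mul continuousOn_const
    apply ContinuousOn.div continuousOn_const (by fun_prop)
    intro s hs; exact sub_ne_zero.2 (ne_of_gt (lt_of_lt_of_le hpR hs.1))
  have hint_b : IntervalIntegrable (hcf M a Q θ) MeasureTheory.volume R r :=
    intervalIntegrable_aux hM ha hsub (continuousOn_hcf hM ha hsub θ) hmR hmr
  have hgint : IntervalIntegrable g MeasureTheory.volume R r := hint_a.add hint_b
  have hint1 : (∫ s in R..r, (1:ℝ) / (s - p)) = Real.log (r - p) - Real.log (R - p) := by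
    have h1 : (∫ s in R..r, (1:ℝ) / (s - p)) = ∫ x in R - p..r - p, 1 / x :=
      intervalIntegral.integral_comp_sub_right (fun x => 1 / x) p
    have h0 : (0:ℝ) ∉ Set.uIcc (R - p) (r - p) := by
      rw [Set.uIcc_of_le (by linarith : R - p ≤ r - p)]
      rintro ⟨h1', h2'⟩; linarith
    rw [h1, integral_one_div h0, Real.log_div (by linarith) (by linarith)]
  have hgval : (∫ s in R..r, g s)
      = cC M a Q * (Real.log (r - p) - Real.log (R - p))
        + (Hf M a Q θ r - Hf M a Q θ R) := by
    rw [hg]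
    rw [intervalIntegral.integral_add hint_a hint_b]
    congr 1
    · rw [intervalIntegral.integral_const_mul, hint1]
    · rw [Hf_eq_integral hM ha hsub θ hmr, Hf_eq_integral hM ha hsub θ hmR]
      exact (intervalIntegral.integral_interval_sub_left
        (intervalIntegrable_aux hM ha hsub (continuousOn_hcf hM ha hsub θ) hmp hmr)
        (intervalIntegrable_aux hM ha hsub (continuousOn_hcf hM ha hsub θ) hmp hmR)).symm
  have hmono : β * (r - R) ≤ ∫ s in R..r, g s := by
    have hconst : (∫ _ in R..r, β) = (r - R) * β := by
      rw [intervalIntegral.integral_const]; simp [smul_eq_mul]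
    calc β * (r - R) = (r - R) * β := by ring
    _ = ∫ _ in R..r, β := hconst.symm
    _ ≤ ∫ s in R..r, g s := by
      apply intervalIntegral.integral_mono_on hr intervalIntegrable_const hgint
      intro s hs
      have hRs : R ≤ s := hs.1
      have hps : p < s := lt_of_lt_of_le hpR hRs
      rw [hg]
      simp only
      rw [mul_one_div, hcf_add hM ha hsub θ hps]
      exact Wv_lower hM ha hsub θ hRs
  have hfinal : tauf M a Q θ r0 r - tauf M a Q θ r0 R = -(∫ s in R..r, g s) := by
    rw [hgval]; simp only [tauf]; ring
  linarith [hmono, hfinal]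

lemma tauf_tendsto_bot (θ r0 : ℝ) :
    Filter.Tendsto (tauf M a Q θ r0) Filter.atTop Filter.atBot := by
  set R := max (max (rplus M a Q + 1) a) 1 with hR
  set β := 1 / (2 * Real.sqrt M) with hβ
  have hβpos : 0 < β := by
    rw [hβ]
    have := Real.sqrt_pos.2 hM
    positivity
  rw [Filter.tendsto_atBot]
  intro b
  filter_upwards [Filter.eventually_ge_atTop
    (max R ((tauf M a Q θ r0 R + β * R - b) / β))] with r hrr
  have h1 : R ≤ r := le_trans (le_max_left _ _) hrr
  have h2 : (tauf M a Q θ r0 R + β * R - b) / β ≤ r := le_trans (le_max_right _ _) hrr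
  have h3 := tauf_est hM ha hsub θ r0 h1
  rw [div_le_iff₀ hβpos] at h2
  nlinarith [h3, h2]

lemma tauf_surj (θ r0 : ℝ) (t : ℝ) :
    ∃ r, rplus M a Q < r ∧ tauf M a Q θ r0 r = t := by
  obtain ⟨ra, hra⟩ := ((tauf_tendsto_top hM ha hsub θ r0).eventually_ge_atTop t).and
    self_mem_nhdsWithin |>.exists
  obtain ⟨rb, hrb⟩ := ((tauf_tendsto_bot hM ha hsub θ r0).eventually_le_atBot t).and
    (Filter.eventually_ge_atTop ra) |>.exists
  have hsub' : Icc ra rb ⊆ Ioi (rplus M a Q) := fun z hz => lt_of_lt_of_le hra.2 hz.1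
  have := intermediate_value_Icc' hrb.2 (tauf_continuousOn hM ha hsub θ r0 hsub')
  obtain ⟨r, hr1, hr2⟩ := this ⟨hrb.1, hra.1⟩
  exact ⟨r, hsub' hr1, hr2⟩

lemma rrf_spec (θ r0 t : ℝ) :
    rplus M a Q < rrf M a Q t θ r0 ∧ tauf M a Q θ r0 (rrf M a Q t θ r0) = t := by
  have hex := tauf_surj hM ha hsub θ r0 t
  rw [rrf, dif_pos hex]
  exact hex.choose_spec

lemma rrf_pos (θ r0 t : ℝ) : rplus M a Q < rrf M a Q t θ r0 :=
  (rrf_spec hM ha hsub θ r0 t).1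

lemma tauf_rrf (θ r0 t : ℝ) : tauf M a Q θ r0 (rrf M a Q t θ r0) = t :=
  (rrf_spec hM ha hsub θ r0 t).2

lemma rrf_tauf (θ r0 : ℝ) {r : ℝ} (hr : rplus M a Q < r) :
    rrf M a Q (tauf M a Q θ r0 r) θ r0 = r := by
  apply (tauf_strictAntiOn hM ha hsub θ r0).injOn
    (rrf_pos hM ha hsub θ r0 _) hr
  exact tauf_rrf hM ha hsub θ r0 _

lemma rrf_zero {θ r0 : ℝ} (hr0 : rplus M a Q < r0) : rrf M a Q 0 θ r0 = r0 := by
  have := rrf_tauf hM ha hsub θ r0 hr0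
  rwa [tauf_self hM ha hsub] at this

lemma rrf_strictAnti (θ r0 : ℝ) : StrictAnti (fun t => rrf M a Q t θ r0) := by
  intro t1 t2 h12
  rcases lt_trichotomy (rrf M a Q t2 θ r0) (rrf M a Q t1 θ r0) with h | h | h
  · exact h
  · exfalso
    have : t2 = t1 := by
      rw [← tauf_rrf hM ha hsub θ r0 t2, ← tauf_rrf hM ha hsub θ r0 t1, h]
    linarith
  · exfalso
    have := tauf_strictAntiOn hM ha hsub θ r0
      (rrf_pos hM ha hsub θ r0 t1) (rrf_pos hM ha hsub θ r0 t2) h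
    rw [tauf_rrf hM ha hsub, tauf_rrf hM ha hsub] at this
    linarith

lemma rrf_continuousAt (θ r0 t : ℝ) : ContinuousAt (fun t' => rrf M a Q t' θ r0) t := by
  set r := rrf M a Q t θ r0 with hrdef
  have hrp : rplus M a Q < r := rrf_pos hM ha hsub θ r0 t
  rw [Metric.continuousAt_iff]
  intro ε hε
  set δ := min (ε / 2) ((r - rplus M a Q) / 2) with hδ
  have hδpos : 0 < δ := lt_min (by linarith) (by linarith)
  have hδε : δ < ε := lt_of_le_of_lt (min_le_left _ _) (by linarith)
  have hδr : rplus M a Q < r - δ := by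
    have : δ ≤ (r - rplus M a Q) / 2 := min_le_right _ _
    linarith
  have ht1 : tauf M a Q θ r0 (r + δ) < t := by
    have h := tauf_strictAntiOn hM ha hsub θ r0 hrp
      (show rplus M a Q < r + δ by linarith) (by linarith : r < r + δ)
    rw [hrdef, tauf_rrf hM ha hsub] at h
    exact h
  have ht2 : t < tauf M a Q θ r0 (r - δ) := by
    have h := tauf_strictAntiOn hM ha hsub θ r0 hδr hrp (by linarith : r - δ < r)
    rw [hrdef, tauf_rrf hM ha hsub] at h
    exact h
  refine ⟨min (t - tauf M a Q θ r0 (r + δ)) (tauf M a Q θ r0 (r - δ) - t),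
    lt_min (by linarith) (by linarith), ?_⟩
  intro t' ht'
  rw [Real.dist_eq] at ht'
  have h1 : tauf M a Q θ r0 (r + δ) < t' := by
    have := abs_lt.1 (lt_of_lt_of_le ht' (min_le_left _ _))
    linarith [this.1]
  have h2 : t' < tauf M a Q θ r0 (r - δ) := by
    have := abs_lt.1 (lt_of_lt_of_le ht' (min_le_right _ _))
    linarith [this.2]
  have hup : rrf M a Q t' θ r0 < r + δ := by
    rcases lt_trichotomy (rrf M a Q t' θ r0) (r + δ) with h | h | h
    · exact h
    · exfalso; rw [← h, tauf_rrf hM ha hsub] at h1; linarith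
    · exfalso
      have := tauf_strictAntiOn hM ha hsub θ r0 (by linarith : rplus M a Q < r + δ)
        (rrf_pos hM ha hsub θ r0 t') h
      rw [tauf_rrf hM ha hsub] at this
      linarith
  have hdown : r - δ < rrf M a Q t' θ r0 := by
    rcases lt_trichotomy (r - δ) (rrf M a Q t' θ r0) with h | h | h
    · exact h
    · exfalso; rw [h, tauf_rrf hM ha hsub] at h2; linarith
    · exfalso
      have := tauf_strictAntiOn hM ha hsub θ r0
        (rrf_pos hM ha hsub θ r0 t') hδr h
      rw [tauf_rrf hM ha hsub] at this
      linarith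
  rw [Real.dist_eq, abs_lt]
  constructor <;> [linarith [hdown]; linarith [hup]]

lemma neg_taud_mul_V (θ : ℝ) {r : ℝ} (hr : rplus M a Q < r) :
    -(sigma2 M a Q r θ / (Sf M a Q r * Δ M a Q r)) * V M a Q θ r = 1 := by
  have hrm : rminus M a Q < r := lt_trans (rm_lt_rp hM ha hsub) hr
  have hσ := (sigma2_pos hM ha hsub hrm (θ := θ)).ne'
  have hS := (Sf_pos hM ha hsub hrm).ne'
  have hΔ : Δ M a Q r ≠ 0 := by
    rw [delta_factor hM ha hsub]
    exact mul_ne_zero (sub_ne_zero.2 (ne_of_gt hr)) (sub_ne_zero.2 (ne_of_gt hrm))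
  have hV : V M a Q θ r = -(Sf M a Q r * Δ M a Q r) / sigma2 M a Q r θ := by
    rw [V, Sf]; ring
  rw [hV]
  field_simp

lemma rrf_hasDerivAt (θ r0 t : ℝ) :
    HasDerivAt (fun t' => rrf M a Q t' θ r0) (V M a Q θ (rrf M a Q t θ r0)) t := by
  set r := rrf M a Q t θ r0 with hrdef
  have hrp : rplus M a Q < r := rrf_pos hM ha hsub θ r0 t
  have hrm : rminus M a Q < r := lt_trans (rm_lt_rp hM ha hsub) hrp
  have hd : HasDerivAt (tauf M a Q θ r0)
      (-(sigma2 M a Q r θ / (Sf M a Q r * Δ M a Q r)))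
      ((fun t' => rrf M a Q t' θ r0) t) := tauf_hasDerivAt hM ha hsub θ r0 hrp
  have hne : -(sigma2 M a Q r θ / (Sf M a Q r * Δ M a Q r)) ≠ 0 :=
    ne_of_lt (neg_lt_zero.2 (taud_pos hM ha hsub θ hrp))
  have hres := HasDerivAt.of_local_left_inverse (rrf_continuousAt hM ha hsub θ r0 t)
    hd hne (Filter.Eventually.of_forall fun y => tauf_rrf hM ha hsub θ r0 y)
  rw [eq_inv_of_mul_eq_one_right (neg_taud_mul_V hM ha hsub θ hrp)]
  exact hres

lemma rrf_le_r0 {θ r0 : ℝ} (hr0 : rplus M a Q < r0) {t : ℝ} (ht : 0 ≤ t) :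
    rrf M a Q t θ r0 ≤ r0 := by
  rcases eq_or_lt_of_le ht with h | h
  · rw [← h, rrf_zero hM ha hsub hr0]
  · have h2 : (fun t => rrf M a Q t θ r0) t < (fun t => rrf M a Q t θ r0) 0 :=
      rrf_strictAnti hM ha hsub θ r0 h
    simp only at h2
    rw [rrf_zero hM ha hsub hr0] at h2
    exact h2.le

lemma rrf_tendsto {θ r0 : ℝ} (hr0 : rplus M a Q < r0) :
    Filter.Tendsto (fun t => rrf M a Q t θ r0) Filter.atTop (nhds (rplus M a Q)) := by
  rw [tendsto_order]
  constructor
  · intro b hb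
    exact Filter.Eventually.of_forall fun t => lt_trans hb (rrf_pos hM ha hsub θ r0 t)
  · intro b hb
    set r' := (rplus M a Q + min b r0) / 2 with hr'
    have h1 : rplus M a Q < min b r0 := lt_min hb hr0
    have h2 : rplus M a Q < r' := by rw [hr']; linarith
    have h3 : r' < min b r0 := by rw [hr']; linarith
    filter_upwards [Filter.eventually_gt_atTop (tauf M a Q θ r0 r')] with t ht
    have : rrf M a Q t θ r0 < r' := by
      rcases lt_trichotomy (rrf M a Q t θ r0) r' with h | h | h
      · exact h
      · exfalso; rw [← h, tauf_rrf hM ha hsub] at ht; linarith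
      · exfalso
        have := tauf_strictAntiOn hM ha hsub θ r0 h2 (rrf_pos hM ha hsub θ r0 t) h
        rw [tauf_rrf hM ha hsub] at this
        linarith
    calc rrf M a Q t θ r0 < r' := this
      _ < min b r0 := h3
      _ ≤ b := min_le_left _ _

lemma rrf_unique {θ r0 : ℝ} (hr0 : rplus M a Q < r0) (ρ : ℝ → ℝ) (T : ℝ) (hT : 0 ≤ T)
    (hρ0 : ρ 0 = r0)
    (hsol : ∀ t ∈ Icc 0 T, rplus M a Q < ρ t ∧ HasDerivAt ρ (V M a Q θ (ρ t)) t) :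
    ∀ t ∈ Icc 0 T, ρ t = rrf M a Q t θ r0 := by
  set φ := fun t => tauf M a Q θ r0 (ρ t) - t with hφ
  have hφd : ∀ t ∈ Icc 0 T, HasDerivAt φ 0 t := by
    intro t ht
    obtain ⟨hρp, hρd⟩ := hsol t ht
    have hρm : rminus M a Q < ρ t := lt_trans (rm_lt_rp hM ha hsub) hρp
    have hcomp := (tauf_hasDerivAt hM ha hsub θ r0 hρp).comp t hρd
    rw [neg_taud_mul_V hM ha hsub θ hρp] at hcomp
    have := hcomp.sub (hasDerivAt_id' t)
    rw [sub_self] at this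
    exact this
  have hconst : ∀ t ∈ Icc 0 T, φ t = φ 0 := by
    apply constant_of_has_deriv_right_zero
    · intro t ht
      exact ((hφd t ht).continuousAt).continuousWithinAt
    · intro t ht
      exact (hφd t (Ico_subset_Icc_self ht)).hasDerivWithinAt
  intro t ht
  have h1 := hconst t ht
  rw [hφ] at h1
  simp only at h1
  rw [hρ0, tauf_self hM ha hsub] at h1
  have h2 : tauf M a Q θ r0 (ρ t) = t := by linarith
  rw [← h2, rrf_tauf hM ha hsub θ r0 (hsol t ht).1, h2]

lemma log_rr (θ : ℝ) {r0 : ℝ} (hr0 : rplus M a Q < r0) (t : ℝ) :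
    cC M a Q * Real.log (rrf M a Q t θ r0 - rplus M a Q)
      = C2f M a Q θ r0 - t - Hf M a Q θ (rrf M a Q t θ r0) := by
  have h := tauf_rrf hM ha hsub θ r0 t
  rw [tauf] at h
  linarith

end Inverse

/-! ### Smoothness of the asymptotic coefficients -/

section Coeffs

set_option linter.unusedSectionVars false

variable {M a Q : ℝ} (hM : 0 < M) (ha : 0 < a) (hsub : a ^ 2 + Q ^ 2 < M ^ 2)

include hM ha hsub

lemma prod_subset_aux :
    (univ ×ˢ Ioi (rplus M a Q) : Set (ℝ × ℝ)) ⊆ univ ×ˢ Ioi (rminus M a Q) :=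
  fun q hq => ⟨trivial, lt_trans (rm_lt_rp hM ha hsub) hq.2⟩

lemma contDiffOn_C2pair :
    ContDiffOn ℝ (⊤ : ℕ∞) (fun q : ℝ × ℝ => C2f M a Q q.1 q.2)
      (univ ×ˢ Ioi (rplus M a Q)) := by
  apply ContDiffOn.add
  · intro q hq
    have hq2 : rplus M a Q < q.2 := hq.2
    exact ContDiffAt.contDiffWithinAt (ContDiffAt.mul contDiffAt_const
      ((Real.contDiffAt_log.2 (ne_of_gt (sub_pos.2 hq2))).comp q
        ((contDiff_snd.sub contDiff_const).contDiffAt)))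
  · exact (contDiffOn_Hpair hM ha hsub).mono (prod_subset_aux hM ha hsub)

lemma contDiffOn_C1pair :
    ContDiffOn ℝ (⊤ : ℕ∞) (fun q : ℝ × ℝ => C1f M a Q q.1 q.2)
      (univ ×ˢ Ioi (rplus M a Q)) := by
  apply ContDiffOn.mul
  · have : ContDiff ℝ (⊤ : ℕ∞) (fun q : ℝ × ℝ =>
        h0f M a Q (rplus M a Q) - Real.sin q.1 ^ 2 * h1f M a Q (rplus M a Q)) := by
      exact contDiff_const.sub (((Real.contDiff_sin.comp contDiff_fst).pow 2).mul contDiff_const)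
    exact fun q hq => (this.contDiffAt).contDiffWithinAt
  · have hmul : ContDiffOn ℝ (⊤ : ℕ∞)
        (fun q : ℝ × ℝ => 2 * κplus M a Q * C2f M a Q q.1 q.2)
        (univ ×ˢ Ioi (rplus M a Q)) :=
      (contDiff_const.contDiffOn).mul (contDiffOn_C2pair hM ha hsub)
    exact Real.contDiff_exp.comp_contDiffOn hmul

end Coeffs

/-! ### Quantitative asymptotics -/

section Asymp

set_option linter.unusedSectionVars false

lemma abs_exp_sub_one {y B : ℝ} (hB : |y| ≤ B) :
    |Real.exp y - 1| ≤ Real.exp B * |y| := by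
  have hB0 : 0 ≤ B := le_trans (abs_nonneg y) hB
  have hmem : y ∈ Icc (-B) B := by
    have := abs_le.1 hB; exact ⟨this.1, this.2⟩
  have h0 : (0:ℝ) ∈ Icc (-B) B := ⟨by linarith, hB0⟩
  have hdiff : ∀ x ∈ Icc (-B) B, DifferentiableAt ℝ Real.exp x :=
    fun x _ => Real.differentiable_exp.differentiableAt
  have hbound : ∀ x ∈ Icc (-B) B, ‖deriv Real.exp x‖ ≤ Real.exp B := by
    intro x hx
    rw [Real.deriv_exp, Real.norm_eq_abs, abs_of_pos (Real.exp_pos x)]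
    exact Real.exp_le_exp.2 hx.2
  have := Convex.norm_image_sub_le_of_norm_deriv_le hdiff hbound (convex_Icc _ _) h0 hmem
  simpa [Real.norm_eq_abs, Real.exp_zero] using this

variable {M a Q : ℝ} (hM : 0 < M) (ha : 0 < a) (hsub : a ^ 2 + Q ^ 2 < M ^ 2)

include hM ha hsub

lemma main_bound {r1 r2 : ℝ} (hr1 : rplus M a Q < r1) (h12 : r1 ≤ r2) :
    ∃ C : ℝ, 0 < C ∧
      ∀ t : ℝ, 0 ≤ t → ∀ θ ∈ Set.Icc (0 : ℝ) Real.pi, ∀ r0 ∈ Set.Icc r1 r2,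
        |(1 / (2 * κplus M a Q)) * Real.log (rrf M a Q t θ r0 - rplus M a Q)
            + t + C1f M a Q θ r0 * Real.exp (-2 * κplus M a Q * t) - C2f M a Q θ r0|
          ≤ C * Real.exp (-4 * κplus M a Q * t) := by
  set p := rplus M a Q with hpdef
  set κ := κplus M a Q with hκdef
  have hκpos : 0 < κ := kappa_pos hM ha hsub
  have hcκ : cC M a Q * (2 * κ) = 1 := cC_kappa hM ha hsub
  have hmp : rminus M a Q < p := rm_lt_rp hM ha hsub
  have hpr2 : p ≤ r2 := le_of_lt (lt_of_lt_of_le hr1 h12)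
  have hIccsub : Icc p r2 ⊆ Ioi (rminus M a Q) := fun s hs => lt_of_lt_of_le hmp hs.1
  have hIccsub' : Icc r1 r2 ⊆ Ioi (rminus M a Q) :=
    fun s hs => lt_trans hmp (lt_of_lt_of_le hr1 hs.1)
  -- bounds for h0f, h1f and their derivatives on `Icc p r2`
  obtain ⟨M0, hM0⟩ := (isCompact_Icc (a := p) (b := r2)).exists_bound_of_continuousOn
    ((continuousOn_h0f hM ha hsub).mono hIccsub)
  obtain ⟨M1, hM1⟩ := (isCompact_Icc (a := p) (b := r2)).exists_bound_of_continuousOn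
    ((continuousOn_h1f hM ha hsub).mono hIccsub)
  obtain ⟨K0, hK0⟩ := (isCompact_Icc (a := p) (b := r2)).exists_bound_of_continuousOn
    (((contDiffOn_h0f hM ha hsub).continuousOn_deriv_of_isOpen isOpen_Ioi (mod_cast le_top)).mono hIccsub)
  obtain ⟨K1, hK1⟩ := (isCompact_Icc (a := p) (b := r2)).exists_bound_of_continuousOn
    (((contDiffOn_h1f hM ha hsub).continuousOn_deriv_of_isOpen isOpen_Ioi (mod_cast le_top)).mono hIccsub)
  set Mh := |M0| + |M1| with hMhdef
  set Lh := |K0| + |K1| with hLhdef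
  have hMh0 : 0 ≤ Mh := by positivity
  have hLh0 : 0 ≤ Lh := by positivity
  have hMh : ∀ θ : ℝ, ∀ s ∈ Icc p r2, |hcf M a Q θ s| ≤ Mh := by
    intro θ s hs
    have h1 := hM0 s hs
    have h2 := hM1 s hs
    rw [Real.norm_eq_abs] at h1 h2
    have hsin : Real.sin θ ^ 2 ≤ 1 := Real.sin_sq_le_one θ
    have hsin0 : 0 ≤ Real.sin θ ^ 2 := sq_nonneg _
    rw [hcf]
    calc |h0f M a Q s - Real.sin θ ^ 2 * h1f M a Q s|
        ≤ |h0f M a Q s| + |Real.sin θ ^ 2 * h1f M a Q s| := abs_sub _ _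
      _ ≤ |M0| + |h1f M a Q s| := by
          apply add_le_add (h1.trans (le_abs_self M0))
          rw [abs_mul, abs_of_nonneg hsin0]
          nlinarith [abs_nonneg (h1f M a Q s)]
      _ ≤ |M0| + |M1| := by
          apply add_le_add_right (h2.trans (le_abs_self M1))
  have hdiff0 : ∀ x ∈ Icc p r2, DifferentiableAt ℝ (h0f M a Q) x := fun x hx =>
    ((contDiffOn_h0f hM ha hsub).differentiableOn (by simp)).differentiableAt
      (isOpen_Ioi.mem_nhds (hIccsub hx))
  have hdiff1 : ∀ x ∈ Icc p r2, DifferentiableAt ℝ (h1f M a Q) x := fun x hx =>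
    ((contDiffOn_h1f hM ha hsub).differentiableOn (by simp)).differentiableAt
      (isOpen_Ioi.mem_nhds (hIccsub hx))
  have hlip : ∀ θ : ℝ, ∀ s ∈ Icc p r2, |hcf M a Q θ s - hcf M a Q θ p| ≤ Lh * (s - p) := by
    intro θ s hs
    have hpmem : p ∈ Icc p r2 := ⟨le_refl _, hpr2⟩
    have l0 : |h0f M a Q s - h0f M a Q p| ≤ |K0| * |s - p| := by
      have := Convex.norm_image_sub_le_of_norm_deriv_le hdiff0
        (fun x hx => ((hK0 x hx).trans (le_abs_self K0))) (convex_Icc _ _) hpmem hs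
      simpa [Real.norm_eq_abs] using this
    have l1 : |h1f M a Q s - h1f M a Q p| ≤ |K1| * |s - p| := by
      have := Convex.norm_image_sub_le_of_norm_deriv_le hdiff1
        (fun x hx => ((hK1 x hx).trans (le_abs_self K1))) (convex_Icc _ _) hpmem hs
      simpa [Real.norm_eq_abs] using this
    have hsin : Real.sin θ ^ 2 ≤ 1 := Real.sin_sq_le_one θ
    have hsin0 : 0 ≤ Real.sin θ ^ 2 := sq_nonneg _
    have hsp : |s - p| = s - p := abs_of_nonneg (by linarith [hs.1])
    rw [hsp] at l0 l1
    have key : hcf M a Q θ s - hcf M a Q θ p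
        = (h0f M a Q s - h0f M a Q p)
          - Real.sin θ ^ 2 * (h1f M a Q s - h1f M a Q p) := by
      rw [hcf, hcf]; ring
    rw [key, hLhdef]
    calc |(h0f M a Q s - h0f M a Q p) - Real.sin θ ^ 2 * (h1f M a Q s - h1f M a Q p)|
        ≤ |h0f M a Q s - h0f M a Q p| + |Real.sin θ ^ 2 * (h1f M a Q s - h1f M a Q p)| :=
          abs_sub _ _
      _ ≤ |K0| * (s - p) + |h1f M a Q s - h1f M a Q p| := by
          apply add_le_add l0
          rw [abs_mul, abs_of_nonneg hsin0]
          nlinarith [abs_nonneg (h1f M a Q s - h1f M a Q p)]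
      _ ≤ |K0| * (s - p) + |K1| * (s - p) := add_le_add_right l1 _
      _ = (|K0| + |K1|) * (s - p) := by ring
  -- bound for C2f on Icc r1 r2
  obtain ⟨Ba, hBa⟩ := (isCompact_Icc (a := r1) (b := r2)).exists_bound_of_continuousOn
    (show ContinuousOn (fun r0 => cC M a Q * Real.log (r0 - p)) (Icc r1 r2) by
      apply continuousOn_const.mul
      apply ContinuousOn.comp Real.continuousOn_log (by fun_prop)
      intro x hx
      exact ne_of_gt (sub_pos.2 (lt_of_lt_of_le hr1 hx.1)))
  obtain ⟨Bb, hBb⟩ := (isCompact_Icc (a := r1) (b := r2)).exists_bound_of_continuousOn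
    (((contDiffOn_H0f hM ha hsub).continuousOn).mono hIccsub')
  obtain ⟨Bc, hBc⟩ := (isCompact_Icc (a := r1) (b := r2)).exists_bound_of_continuousOn
    (((contDiffOn_Psif hM ha hsub).continuousOn).mono hIccsub')
  set B2 := |Ba| + |Bb| + |Bc| with hB2def
  have hB20 : 0 ≤ B2 := by positivity
  have hB2 : ∀ θ : ℝ, ∀ r0 ∈ Icc r1 r2, |C2f M a Q θ r0| ≤ B2 := by
    intro θ r0 hr0
    have h1 := hBa r0 hr0
    have h2 := hBb r0 hr0
    have h3 := hBc r0 hr0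
    rw [Real.norm_eq_abs] at h1 h2 h3
    have hsin : Real.sin θ ^ 2 ≤ 1 := Real.sin_sq_le_one θ
    have hsin0 : 0 ≤ Real.sin θ ^ 2 := sq_nonneg _
    rw [C2f, Hf, hB2def]
    calc |cC M a Q * Real.log (r0 - p) + (H0f M a Q r0 - Real.sin θ ^ 2 * Psif M a Q r0)|
        ≤ |cC M a Q * Real.log (r0 - p)| + |H0f M a Q r0 - Real.sin θ ^ 2 * Psif M a Q r0| :=
          abs_add_le _ _
      _ ≤ |Ba| + (|H0f M a Q r0| + |Real.sin θ ^ 2 * Psif M a Q r0|) :=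
          add_le_add (h1.trans (le_abs_self Ba)) (abs_sub _ _)
      _ ≤ |Ba| + (|Bb| + |Psif M a Q r0|) := by
          apply add_le_add_right
          apply add_le_add (h2.trans (le_abs_self Bb))
          rw [abs_mul, abs_of_nonneg hsin0]
          nlinarith [abs_nonneg (Psif M a Q r0)]
      _ ≤ |Ba| + (|Bb| + |Bc|) := by
          have := h3.trans (le_abs_self Bc)
          linarith
      _ = |Ba| + |Bb| + |Bc| := by ring
  -- the constants
  set BH := Mh * (r2 - p) with hBHdef
  have hBH0 : 0 ≤ BH := mul_nonneg hMh0 (by linarith)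
  set K1e := Real.exp (2 * κ * B2 + 2 * κ * BH) with hK1edef
  have hK1e0 : 0 < K1e := Real.exp_pos _
  set Cb := Mh * Real.exp (2 * κ * B2) * (Real.exp (2 * κ * BH) * (2 * κ * Mh * K1e))
    with hCbdef
  have hCb0 : 0 ≤ Cb := by positivity
  refine ⟨Cb + Lh * K1e ^ 2 + 1, by positivity, ?_⟩
  intro t ht θ _ r0 hr0
  have hpr0 : p < r0 := lt_of_lt_of_le hr1 hr0.1
  set r := rrf M a Q t θ r0 with hrdef
  have hrp : p < r := rrf_pos hM ha hsub θ r0 t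
  have hrm : rminus M a Q < r := lt_trans hmp hrp
  have hrr2 : r ≤ r2 := le_trans (rrf_le_r0 hM ha hsub hpr0 ht) hr0.2
  have hrmem : r ∈ Icc p r2 := ⟨hrp.le, hrr2⟩
  set x := r - p with hxdef
  have hx : 0 < x := sub_pos.2 hrp
  have hxle : x ≤ r2 - p := by rw [hxdef]; linarith
  -- integral bounds for Hf
  have hH_int : |Hf M a Q θ r| ≤ Mh * x := by
    rw [Hf_eq_integral hM ha hsub θ hrm]
    have := intervalIntegral.norm_integral_le_of_norm_le_const (C := Mh)
      (f := hcf M a Q θ) (a := p) (b := r) ?_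
    · rw [Real.norm_eq_abs] at this
      calc |∫ s in p..r, hcf M a Q θ s| ≤ Mh * |r - p| := this
        _ = Mh * x := by rw [abs_of_pos hx]
    · intro s hs
      rw [Set.uIoc_of_le hrp.le] at hs
      rw [Real.norm_eq_abs]
      exact hMh θ s ⟨hs.1.le, hs.2.trans hrr2⟩
  have hHBH : |Hf M a Q θ r| ≤ BH :=
    hH_int.trans (mul_le_mul_of_nonneg_left hxle hMh0)
  have hC2b : |C2f M a Q θ r0| ≤ B2 := hB2 θ r0 hr0
  -- the key exponential identity
  have hlog := log_rr hM ha hsub θ hpr0 t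
  rw [← hrdef, ← hxdef] at hlog
  have hlogx : Real.log x = 2 * κ * (C2f M a Q θ r0 - t - Hf M a Q θ r) := by
    linear_combination (2 * κ) * hlog - Real.log x * hcκ
  have hxval : x = Real.exp (2 * κ * C2f M a Q θ r0 - 2 * κ * t - 2 * κ * Hf M a Q θ r) := by
    rw [← Real.exp_log hx, hlogx]
    congr 1
    ring
  have hxbound : x ≤ K1e * Real.exp (-2 * κ * t) := by
    rw [hxval, hK1edef, ← Real.exp_add]
    apply Real.exp_le_exp.2
    have e1 : 2 * κ * C2f M a Q θ r0 ≤ 2 * κ * B2 :=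
      mul_le_mul_of_nonneg_left ((le_abs_self _).trans hC2b) (by positivity)
    have e2 : -(2 * κ * Hf M a Q θ r) ≤ 2 * κ * BH := by
      have := mul_le_mul_of_nonneg_left ((neg_le_abs _).trans hHBH) (le_of_lt (by positivity : (0:ℝ) < 2 * κ))
      linarith [this]
    linarith [e1, e2]
  -- linearization of Hf
  have hHlin : |Hf M a Q θ r - hcf M a Q θ p * x| ≤ Lh * x ^ 2 := by
    have hint1 : IntervalIntegrable (hcf M a Q θ) MeasureTheory.volume p r :=
      intervalIntegrable_aux hM ha hsub (continuousOn_hcf hM ha hsub θ) hmp hrm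
    have hint2 : IntervalIntegrable (fun _ => hcf M a Q θ p) MeasureTheory.volume p r :=
      intervalIntegrable_const
    have hval : Hf M a Q θ r - hcf M a Q θ p * x
        = ∫ s in p..r, (hcf M a Q θ s - hcf M a Q θ p) := by
      rw [intervalIntegral.integral_sub hint1 hint2, Hf_eq_integral hM ha hsub θ hrm,
        intervalIntegral.integral_const, smul_eq_mul, hxdef]
      ring
    rw [hval]
    have := intervalIntegral.norm_integral_le_of_norm_le_const (C := Lh * x)
      (f := fun s => hcf M a Q θ s - hcf M a Q θ p) (a := p) (b := r) ?_
    · rw [Real.norm_eq_abs] at this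
      calc |∫ s in p..r, (hcf M a Q θ s - hcf M a Q θ p)| ≤ Lh * x * |r - p| := this
        _ = Lh * x ^ 2 := by rw [abs_of_pos hx]; ring
    · intro s hs
      rw [Set.uIoc_of_le hrp.le] at hs
      rw [Real.norm_eq_abs]
      calc |hcf M a Q θ s - hcf M a Q θ p| ≤ Lh * (s - p) :=
            hlip θ s ⟨hs.1.le, hs.2.trans hrr2⟩
        _ ≤ Lh * x := mul_le_mul_of_nonneg_left (by rw [hxdef]; linarith [hs.2]) hLh0
  -- put the pieces together
  have hone : 1 / (2 * κ) = cC M a Q := by rw [hκdef]; exact one_div_two_kappa hM ha hsub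
  rw [hone]
  set E1 := Real.exp (2 * κ * C2f M a Q θ r0 - 2 * κ * t) with hE1def
  have hE1pos : 0 < E1 := Real.exp_pos _
  have hC1split : C1f M a Q θ r0 * Real.exp (-2 * κ * t) = hcf M a Q θ p * E1 := by
    rw [C1f, hE1def, ← hκdef, mul_assoc, ← Real.exp_add]
    congr 2
    ring
  have hT : cC M a Q * Real.log x + t + C1f M a Q θ r0 * Real.exp (-2 * κ * t)
      - C2f M a Q θ r0
      = hcf M a Q θ p * (E1 - x) - (Hf M a Q θ r - hcf M a Q θ p * x) := by
    rw [hC1split]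
    have hkey2 : cC M a Q * Real.log x + t - C2f M a Q θ r0 = -Hf M a Q θ r := by
      linear_combination hlog
    linear_combination hkey2
  rw [hT]
  -- bound |E1 - x|
  have hxE1 : x = E1 * Real.exp (-(2 * κ * Hf M a Q θ r)) := by
    rw [hE1def, ← Real.exp_add, hxval]
    exact congrArg Real.exp (by ring)
  have hE1x : |E1 - x| ≤ E1 * (Real.exp (2 * κ * BH) * (2 * κ * |Hf M a Q θ r|)) := by
    rw [hxE1]
    have : E1 - E1 * Real.exp (-(2 * κ * Hf M a Q θ r))
        = -(E1 * (Real.exp (-(2 * κ * Hf M a Q θ r)) - 1)) := by ring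
    rw [this, abs_neg, abs_mul, abs_of_pos hE1pos]
    apply mul_le_mul_of_nonneg_left _ hE1pos.le
    have habs : |-(2 * κ * Hf M a Q θ r)| ≤ 2 * κ * BH := by
      rw [abs_neg, abs_mul, abs_of_pos (by positivity : (0:ℝ) < 2 * κ)]
      exact mul_le_mul_of_nonneg_left hHBH (by positivity)
    have := abs_exp_sub_one habs
    calc |Real.exp (-(2 * κ * Hf M a Q θ r)) - 1|
        ≤ Real.exp (2 * κ * BH) * |-(2 * κ * Hf M a Q θ r)| := this
      _ = Real.exp (2 * κ * BH) * (2 * κ * |Hf M a Q θ r|) := by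
          rw [abs_neg, abs_mul, abs_of_pos (by positivity : (0:ℝ) < 2 * κ)]
  have hE1bound : E1 ≤ Real.exp (2 * κ * B2) * Real.exp (-2 * κ * t) := by
    rw [hE1def, ← Real.exp_add]
    apply Real.exp_le_exp.2
    have e1 : 2 * κ * C2f M a Q θ r0 ≤ 2 * κ * B2 :=
      mul_le_mul_of_nonneg_left ((le_abs_self _).trans hC2b) (by positivity)
    linarith [e1]
  have hexp4 : Real.exp (-2 * κ * t) * Real.exp (-2 * κ * t) = Real.exp (-4 * κ * t) := by
    rw [← Real.exp_add]
    congr 1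
    ring
  have hhp : |hcf M a Q θ p| ≤ Mh := hMh θ p ⟨le_refl _, hpr2⟩
  have hHabs : |Hf M a Q θ r| ≤ Mh * (K1e * Real.exp (-2 * κ * t)) :=
    hH_int.trans (mul_le_mul_of_nonneg_left hxbound hMh0)
  have hterm1 : |hcf M a Q θ p * (E1 - x)| ≤ Cb * Real.exp (-4 * κ * t) := by
    rw [abs_mul, hCbdef]
    have h1 : |E1 - x| ≤ (Real.exp (2 * κ * B2) * Real.exp (-2 * κ * t))
        * (Real.exp (2 * κ * BH) * (2 * κ * (Mh * (K1e * Real.exp (-2 * κ * t))))) := by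
      apply hE1x.trans
      apply mul_le_mul hE1bound _ (by positivity) (by positivity)
      apply mul_le_mul_of_nonneg_left _ (by positivity)
      exact mul_le_mul_of_nonneg_left hHabs (by positivity)
    calc |hcf M a Q θ p| * |E1 - x|
        ≤ Mh * ((Real.exp (2 * κ * B2) * Real.exp (-2 * κ * t))
          * (Real.exp (2 * κ * BH) * (2 * κ * (Mh * (K1e * Real.exp (-2 * κ * t)))))) :=
          mul_le_mul hhp h1 (abs_nonneg _) hMh0
      _ = Mh * Real.exp (2 * κ * B2) * (Real.exp (2 * κ * BH) * (2 * κ * Mh * K1e))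
          * (Real.exp (-2 * κ * t) * Real.exp (-2 * κ * t)) := by ring
      _ = Mh * Real.exp (2 * κ * B2) * (Real.exp (2 * κ * BH) * (2 * κ * Mh * K1e))
          * Real.exp (-4 * κ * t) := by rw [hexp4]
  have hterm2 : |Hf M a Q θ r - hcf M a Q θ p * x| ≤ Lh * K1e ^ 2 * Real.exp (-4 * κ * t) := by
    apply hHlin.trans
    have hx2 : x ^ 2 ≤ (K1e * Real.exp (-2 * κ * t)) ^ 2 := by
      apply pow_le_pow_left₀ hx.le hxbound
    calc Lh * x ^ 2 ≤ Lh * (K1e * Real.exp (-2 * κ * t)) ^ 2 :=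
          mul_le_mul_of_nonneg_left hx2 hLh0
      _ = Lh * K1e ^ 2 * (Real.exp (-2 * κ * t) * Real.exp (-2 * κ * t)) := by ring
      _ = Lh * K1e ^ 2 * Real.exp (-4 * κ * t) := by rw [hexp4]
  calc |hcf M a Q θ p * (E1 - x) - (Hf M a Q θ r - hcf M a Q θ p * x)|
      ≤ |hcf M a Q θ p * (E1 - x)| + |Hf M a Q θ r - hcf M a Q θ p * x| := abs_sub _ _
    _ ≤ Cb * Real.exp (-4 * κ * t) + Lh * K1e ^ 2 * Real.exp (-4 * κ * t) :=
        add_le_add hterm1 hterm2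
    _ ≤ (Cb + Lh * K1e ^ 2 + 1) * Real.exp (-4 * κ * t) := by
        linarith [(Real.exp_pos (-4 * κ * t)).le]

end Asymp

theorem collapse_ode_global_asymptotics (M a Q : ℝ) (hM : 0 < M) (ha : 0 < a)
    (hsub : a ^ 2 + Q ^ 2 < M ^ 2) :
    ∃ rr : ℝ → ℝ → ℝ → ℝ,
      (∀ θ ∈ Set.Icc (0 : ℝ) Real.pi, ∀ r0 : ℝ, rplus M a Q < r0 →
        -- `rr · θ r0` solves the ODE for all t ≥ 0 with initial value r0 …
        rr 0 θ r0 = r0 ∧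
        (∀ t : ℝ, 0 ≤ t → rplus M a Q < rr t θ r0) ∧
        (∀ t : ℝ, 0 ≤ t →
          HasDerivAt (fun t' => rr t' θ r0) (V M a Q θ (rr t θ r0)) t) ∧
        -- … is strictly decreasing and tends to r₊, …
        StrictAntiOn (fun t => rr t θ r0) (Set.Ici 0) ∧
        Filter.Tendsto (fun t => rr t θ r0) Filter.atTop (nhds (rplus M a Q)) ∧
        -- … and is THE (maximal) solution : any solution on [0,T] agrees with it.
        (∀ (ρ : ℝ → ℝ) (T : ℝ), 0 ≤ T → ρ 0 = r0 →
          (∀ t ∈ Set.Icc 0 T, rplus M a Q < ρ t ∧ HasDerivAt ρ (V M a Q θ (ρ t)) t) →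
          ∀ t ∈ Set.Icc 0 T, ρ t = rr t θ r0)) ∧
      -- asymptotic behaviour with smooth coefficients Ĉ₁, Ĉ₂
      ∃ C1 C2 : ℝ → ℝ → ℝ,
        ContDiffOn ℝ (⊤ : ℕ∞) (fun p : ℝ × ℝ => C1 p.1 p.2)
          (Set.Icc 0 Real.pi ×ˢ Set.Ioi (rplus M a Q)) ∧
        ContDiffOn ℝ (⊤ : ℕ∞) (fun p : ℝ × ℝ => C2 p.1 p.2)
          (Set.Icc 0 Real.pi ×ˢ Set.Ioi (rplus M a Q)) ∧
        ∀ r1 r2 : ℝ, rplus M a Q < r1 → r1 ≤ r2 →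
          ∃ C : ℝ, 0 < C ∧
            ∀ t : ℝ, 0 ≤ t → ∀ θ ∈ Set.Icc (0 : ℝ) Real.pi, ∀ r0 ∈ Set.Icc r1 r2,
              |(1 / (2 * κplus M a Q)) * Real.log (rr t θ r0 - rplus M a Q)
                  + t + C1 θ r0 * Real.exp (-2 * κplus M a Q * t) - C2 θ r0|
                ≤ C * Real.exp (-4 * κplus M a Q * t) := by
  refine ⟨fun t θ r0 => rrf M a Q t θ r0, ?_, ?_⟩
  · intro θ _ r0 hr0
    refine ⟨rrf_zero hM ha hsub hr0, fun t _ => rrf_pos hM ha hsub θ r0 t,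
      fun t _ => rrf_hasDerivAt hM ha hsub θ r0 t,
      (rrf_strictAnti hM ha hsub θ r0).strictAntiOn _,
      rrf_tendsto hM ha hsub hr0,
      fun ρ T hT hρ0 hsol => rrf_unique hM ha hsub hr0 ρ T hT hρ0 hsol⟩
  · refine ⟨C1f M a Q, C2f M a Q, ?_, ?_, ?_⟩
    · exact (contDiffOn_C1pair hM ha hsub).mono
        (fun q hq => ⟨trivial, hq.2⟩)
    · exact (contDiffOn_C2pair hM ha hsub).mono
        (fun q hq => ⟨trivial, hq.2⟩)
    · intro r1 r2 h1 h2
      exact main_bound hM ha hsub h1 h2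


end Stmt4
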